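/- Let n ≥ 2, 0 ≤ r ≤ n−1, set c(j) := (n−j)·C(n,j), and let κ ∈ ℝⁿ satisfy e_j(κ) > 0 for all 1 ≤ j ≤ r+1. Then (r+1)·c(r+1)·H_{r+2}(κ) − n·c(r)·H_1(κ)·H_{r+1}(κ) ≤ −(r+1)·c(r)·H_{r+1}(κ)^{(r+2)/(r+1)}, with the convention H_{n+1}(κ) := 0. (This pointwise curvature estimate is the key computation in the proof of Theorem 5.1 of the paper on almost r-stable hypersurfaces: it combines H_{r+2} ≤ H₁H_{r+1}, the Maclaurin inequality H₁ ≥ H_{r+1}^{1/(r+1)}, and the identity c(r+1) − n·c(r)/(r+1) = −c(r).) -/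

import Mathlib

/-- The `j`-th elementary symmetric polynomial of `κ₁, …, κₙ`.
For `j > n` this is `0`, so that `H_{n+1} = 0` holds by convention. -/
noncomputable def esymmFn (n : ℕ) (κ : Fin n → ℝ) (j : ℕ) : ℝ :=
  ∑ A ∈ Finset.univ.powersetCard j, ∏ i ∈ A, κ i

/-- The `j`-th normalized elementary symmetric function
`H_j(κ) = e_j(κ)/C(n,j)` (the higher order mean curvatures);
note `Hmean n κ (n+1) = 0`, matching the convention `H_{n+1} := 0`. -/
noncomputable def Hmean (n : ℕ) (κ : Fin n → ℝ) (j : ℕ) : ℝ :=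
  esymmFn n κ j / (n.choose j : ℝ)

/-- The normalizing constants `c(j) = (n−j)·C(n,j)`, with `tr(T_j) = c(j)H_j`. -/
noncomputable def cConst (n j : ℕ) : ℝ := ((n - j) * n.choose j : ℕ)

open Polynomial

private lemma bottomNewton : ∀ (d : ℕ) (g : Polynomial ℝ), g.natDegree = d →
    Multiset.card g.roots = d →
    2 * (d : ℝ) * g.coeff 0 * g.coeff 2 ≤ ((d : ℝ) - 1) * g.coeff 1 ^ 2 := by
  intro d
  induction d with
  | zero =>
    intro g hdeg _
    have h1 : g.coeff 1 = 0 := coeff_eq_zero_of_natDegree_lt (by omega)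
    have h2 : g.coeff 2 = 0 := coeff_eq_zero_of_natDegree_lt (by omega)
    simp [h1, h2]
  | succ d ih =>
    intro g hdeg hroots
    have hg0 : g ≠ 0 := by
      intro h; rw [h] at hroots; simp at hroots
    have hcard : 0 < Multiset.card g.roots := by omega
    obtain ⟨a, ha⟩ := Multiset.card_pos_iff_exists_mem.mp hcard
    obtain ⟨h, hgh⟩ := dvd_iff_isRoot.mpr (isRoot_of_mem_roots ha)
    have hh0 : h ≠ 0 := by rintro rfl; rw [mul_zero] at hgh; exact hg0 hgh
    have hXa : (X - C a : Polynomial ℝ) ≠ 0 := X_sub_C_ne_zero a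
    have hdegh : h.natDegree = d := by
      have h2 := natDegree_mul hXa hh0
      rw [← hgh, natDegree_X_sub_C] at h2; omega
    have hrootsh : Multiset.card h.roots = d := by
      have h3 := roots_mul (hgh ▸ hg0 : ((X - C a) * h : Polynomial ℝ) ≠ 0)
      rw [← hgh, roots_X_sub_C] at h3
      have h4 : Multiset.card g.roots = 1 + Multiset.card h.roots := by
        rw [h3]; simp [add_comm]
      omega
    have c0 : g.coeff 0 = -(a * h.coeff 0) := by
      rw [hgh, mul_coeff_zero]; simp
    have c1 : g.coeff 1 = h.coeff 0 - a * h.coeff 1 := by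
      rw [hgh, sub_mul, coeff_sub, coeff_C_mul]
      have h5 := coeff_X_mul h 0
      norm_num at h5 ⊢
    have c2 : g.coeff 2 = h.coeff 1 - a * h.coeff 2 := by
      rw [hgh, sub_mul, coeff_sub, coeff_C_mul]
      have h5 := coeff_X_mul h 1
      norm_num at h5 ⊢
    rcases Nat.eq_zero_or_pos d with rfl | hd
    · have h1 : h.coeff 1 = 0 := coeff_eq_zero_of_natDegree_lt (by omega)
      have h2 : h.coeff 2 = 0 := coeff_eq_zero_of_natDegree_lt (by omega)
      rw [c0, c1, c2, h1, h2]
      norm_num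
    · have IH := ih h hdegh hrootsh
      have hd1 : (1 : ℝ) ≤ (d : ℝ) := by exact_mod_cast hd
      have F2 : (0 : ℝ) ≤ a ^ 2 * (((d : ℝ) - 1) * h.coeff 1 ^ 2 - 2 * (d : ℝ) * h.coeff 0 * h.coeff 2) :=
        mul_nonneg (sq_nonneg a) (by linarith)
      rw [c0, c1, c2]
      push_cast
      nlinarith [sq_nonneg ((d : ℝ) * h.coeff 0 + a * h.coeff 1), F2, hd1,
        mul_nonneg (mul_nonneg (sub_nonneg.mpr hd1) (sq_nonneg a))
          (sub_nonneg.mpr IH)]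

private lemma iter_deriv_rr (p : Polynomial ℝ) (hp : Multiset.card p.roots = p.natDegree)
    (m : ℕ) :
    Multiset.card (derivative^[m] p).roots = (derivative^[m] p).natDegree ∧
      (derivative^[m] p).natDegree = p.natDegree - m := by
  induction m with
  | zero => simp [hp]
  | succ m ih =>
    obtain ⟨h1, h2⟩ := ih
    rw [Function.iterate_succ_apply']
    set q := derivative^[m] p with hq
    have e1 := q.card_roots_le_derivative
    have e2 := q.natDegree_derivative_le
    have e3 := (derivative q).card_roots'
    constructor <;> omega

private lemma newtonE (n : ℕ) (κ : Fin n → ℝ) (j t : ℕ) (hn : n = j + 2 + t) :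
    ((j : ℝ) + 2) * ((t : ℝ) + 2) * (esymmFn n κ (j + 2) * esymmFn n κ j) ≤
      ((j : ℝ) + 1) * ((t : ℝ) + 1) * esymmFn n κ (j + 1) ^ 2 := by
  set f : Polynomial ℝ := ∏ i ∈ Finset.univ, (X + C (κ i)) with hf
  have hfdeg : f.natDegree = n := by
    rw [hf, natDegree_prod _ _ (fun i _ => X_add_C_ne_zero (κ i))]
    simp
  have hfroots : Multiset.card f.roots = n := by
    have hfe : f = (Multiset.map (fun a => X - C a)
        ((Finset.univ.val : Multiset (Fin n)).map fun i => -κ i)).prod := by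
      rw [hf, Finset.prod_eq_multiset_prod, Multiset.map_map]
      congr 1
      apply Multiset.map_congr rfl
      intro i _
      simp [sub_neg_eq_add]
    rw [hfe, roots_multiset_prod_X_sub_C]
    simp
  have hfcoeff : ∀ k, k ≤ n → f.coeff k = esymmFn n κ (n - k) := by
    intro k hk
    rw [hf, Finset.prod_X_add_C_coeff _ _ (by simpa using hk)]
    simp [esymmFn]
  obtain ⟨hgr, hgd⟩ := iter_deriv_rr f (by rw [hfroots, hfdeg]) t
  set g := derivative^[t] f with hg
  have hdg : g.natDegree = j + 2 := by omega
  have BN := bottomNewton (j + 2) g hdg (by omega)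
  have hc0 : g.coeff 0 = (Nat.descFactorial t t : ℝ) * esymmFn n κ (j + 2) := by
    rw [hg, coeff_iterate_derivative, nsmul_eq_mul, hfcoeff (0 + t) (by omega)]
    simp only [Nat.zero_add]
    congr 2
    omega
  have hc1 : g.coeff 1 = (Nat.descFactorial (1 + t) t : ℝ) * esymmFn n κ (j + 1) := by
    rw [hg, coeff_iterate_derivative, nsmul_eq_mul, hfcoeff (1 + t) (by omega)]
    congr 2
    omega
  have hc2 : g.coeff 2 = (Nat.descFactorial (2 + t) t : ℝ) * esymmFn n κ j := by
    rw [hg, coeff_iterate_derivative, nsmul_eq_mul, hfcoeff (2 + t) (by omega)]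
    congr 2
    omega
  -- descFactorial values
  have hd0 : (Nat.descFactorial t t : ℝ) = (Nat.factorial t : ℝ) := by
    rw [Nat.descFactorial_self]
  have hd1 : (Nat.descFactorial (1 + t) t : ℝ) = ((t : ℝ) + 1) * (Nat.factorial t : ℝ) := by
    have : Nat.descFactorial (1 + t) t = (t + 1) * Nat.factorial t := by
      rw [Nat.descFactorial_eq_factorial_mul_choose]
      rw [show (1 + t).choose t = (1 + t).choose 1 from by
        rw [← Nat.choose_symm (by omega)]; congr 1; omega]
      rw [Nat.choose_one_right]
      ring
    exact_mod_cast congrArg (fun x : ℕ => (x : ℝ)) this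
  have hd2 : (Nat.descFactorial (2 + t) t : ℝ) * 2
      = ((t : ℝ) + 1) * ((t : ℝ) + 2) * (Nat.factorial t : ℝ) := by
    have h2 : Nat.descFactorial (2 + t) t * 2 = (t + 1) * (t + 2) * Nat.factorial t := by
      rw [Nat.descFactorial_eq_factorial_mul_choose]
      rw [show (2 + t).choose t = (2 + t).choose 2 from by
        rw [← Nat.choose_symm (by omega)]; congr 1; omega]
      have h3 := Nat.add_one_mul_choose_eq (t + 1) 1
      rw [Nat.choose_one_right] at h3
      have h4 : (2 + t).choose 2 * 2 = (t + 2) * (t + 1) := by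
        rw [show 2 + t = t + 2 from by omega]
        rw [show t + 1 + 1 = t + 2 from rfl,
          show 1 + 1 = 2 from rfl] at h3
        omega
      calc Nat.factorial t * (2 + t).choose 2 * 2
          = Nat.factorial t * ((2 + t).choose 2 * 2) := by ring
        _ = Nat.factorial t * ((t + 2) * (t + 1)) := by rw [h4]
        _ = (t + 1) * (t + 2) * Nat.factorial t := by ring
    exact_mod_cast congrArg (fun x : ℕ => (x : ℝ)) h2
  rw [hc0, hc1, hc2, hd0, hd1] at BN
  have hd2' : (Nat.descFactorial (2 + t) t : ℝ)
      = ((t : ℝ) + 1) * ((t : ℝ) + 2) * (Nat.factorial t : ℝ) / 2 := by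
    linarith
  rw [hd2'] at BN
  have hF : (0 : ℝ) < (Nat.factorial t : ℝ) := by exact_mod_cast t.factorial_pos
  have hcpos : (0 : ℝ) < ((t : ℝ) + 1) * (Nat.factorial t : ℝ) ^ 2 := by positivity
  refine le_of_mul_le_mul_left ?_ hcpos
  calc ((t : ℝ) + 1) * (Nat.factorial t : ℝ) ^ 2 *
        (((j : ℝ) + 2) * ((t : ℝ) + 2) * (esymmFn n κ (j + 2) * esymmFn n κ j))
      = 2 * ((j + 2 : ℕ) : ℝ) * ((Nat.factorial t : ℝ) * esymmFn n κ (j + 2)) *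
        (((t : ℝ) + 1) * ((t : ℝ) + 2) * (Nat.factorial t : ℝ) / 2 * esymmFn n κ j) := by
        push_cast; ring
    _ ≤ (((j + 2 : ℕ) : ℝ) - 1) * (((t : ℝ) + 1) * (Nat.factorial t : ℝ) * esymmFn n κ (j + 1)) ^ 2 := BN
    _ = ((t : ℝ) + 1) * (Nat.factorial t : ℝ) ^ 2 *
        (((j : ℝ) + 1) * ((t : ℝ) + 1) * esymmFn n κ (j + 1) ^ 2) := by push_cast; ring

private lemma esymmFn_zero (n : ℕ) (κ : Fin n → ℝ) : esymmFn n κ 0 = 1 := by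
  simp [esymmFn]

private lemma esymmFn_gt (n : ℕ) (κ : Fin n → ℝ) (j : ℕ) (hj : n < j) :
    esymmFn n κ j = 0 := by
  rw [esymmFn, Finset.powersetCard_eq_empty.mpr (by simpa using hj), Finset.sum_empty]

private lemma newtonH (n : ℕ) (κ : Fin n → ℝ) (j : ℕ) (hj : j + 1 ≤ n) :
    Hmean n κ j * Hmean n κ (j + 2) ≤ Hmean n κ (j + 1) ^ 2 := by
  rcases Nat.lt_or_ge (j + 1) n with hlt | hge
  · -- j + 2 ≤ n
    obtain ⟨t, ht⟩ : ∃ t, n = j + 2 + t := ⟨n - (j + 2), by omega⟩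
    have hNE := newtonE n κ j t ht
    have hCj : (0 : ℝ) < (n.choose j : ℝ) := by
      exact_mod_cast Nat.choose_pos (by omega)
    have hCj1 : (0 : ℝ) < (n.choose (j + 1) : ℝ) := by
      exact_mod_cast Nat.choose_pos (by omega)
    have hCj2 : (0 : ℝ) < (n.choose (j + 2) : ℝ) := by
      exact_mod_cast Nat.choose_pos (by omega)
    rw [Hmean, Hmean, Hmean, div_mul_div_comm, div_pow,
      div_le_div_iff₀ (by positivity) (by positivity)]
    -- choose identities
    have id1 : ((n.choose (j + 1) : ℝ)) * ((j : ℝ) + 1) = (n.choose j : ℝ) * ((t : ℝ) + 2) := by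
      have h0 := Nat.choose_succ_right_eq n j
      have h1 : n - j = t + 2 := by omega
      rw [h1] at h0
      exact_mod_cast congrArg (fun x : ℕ => (x : ℝ)) h0
    have id2 : ((n.choose (j + 2) : ℝ)) * ((j : ℝ) + 2) = (n.choose (j + 1) : ℝ) * ((t : ℝ) + 1) := by
      have h0 := Nat.choose_succ_right_eq n (j + 1)
      have h1 : n - (j + 1) = t + 1 := by omega
      rw [h1] at h0
      exact_mod_cast congrArg (fun x : ℕ => (x : ℝ)) h0
    have hPpos : (0 : ℝ) < ((j : ℝ) + 1) * ((t : ℝ) + 1) := by positivity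
    refine le_of_mul_le_mul_left ?_ hPpos
    have step := mul_le_mul_of_nonneg_left hNE
      (le_of_lt (mul_pos hCj hCj2))
    calc ((j : ℝ) + 1) * ((t : ℝ) + 1) *
          (esymmFn n κ j * esymmFn n κ (j + 2) * (n.choose (j + 1) : ℝ) ^ 2)
        = (n.choose j : ℝ) * (n.choose (j + 2) : ℝ) *
          (((j : ℝ) + 2) * ((t : ℝ) + 2) * (esymmFn n κ (j + 2) * esymmFn n κ j)) := by
          linear_combination (esymmFn n κ j * esymmFn n κ (j + 2) * ((t : ℝ) + 1) *
            (n.choose (j + 1) : ℝ)) * id1 - (esymmFn n κ j * esymmFn n κ (j + 2) *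
            ((t : ℝ) + 2) * (n.choose j : ℝ)) * id2
      _ ≤ (n.choose j : ℝ) * (n.choose (j + 2) : ℝ) *
          (((j : ℝ) + 1) * ((t : ℝ) + 1) * esymmFn n κ (j + 1) ^ 2) := step
      _ = ((j : ℝ) + 1) * ((t : ℝ) + 1) *
          (esymmFn n κ (j + 1) ^ 2 * ((n.choose j : ℝ) * (n.choose (j + 2) : ℝ))) := by ring
  · -- j + 1 = n, so H (j+2) = 0
    have hn : j + 2 = n + 1 := by omega
    have h0 : Hmean n κ (j + 2) = 0 := by
      rw [Hmean, esymmFn_gt n κ (j + 2) (by omega), zero_div]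
    rw [h0, mul_zero]
    positivity

/-- The key pointwise curvature estimate in the proof of Theorem 5.1:
`(r+1)c(r+1)H_{r+2} − n c(r) H₁ H_{r+1} ≤ −(r+1)c(r)H_{r+1}^{(r+2)/(r+1)}`
for `κ` in the Gårding cone `Γ_{r+1}`. -/
theorem stability_curvature_estimate (n : ℕ) (hn : 2 ≤ n) (r : ℕ)
    (hr : r + 1 ≤ n) (κ : Fin n → ℝ)
    (hpos : ∀ j, 1 ≤ j → j ≤ r + 1 → 0 < esymmFn n κ j) :
    ((r : ℝ) + 1) * cConst n (r + 1) * Hmean n κ (r + 2) -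
        (n : ℝ) * cConst n r * Hmean n κ 1 * Hmean n κ (r + 1) ≤
      -(((r : ℝ) + 1) * cConst n r *
        Hmean n κ (r + 1) ^ (((r : ℝ) + 2) / ((r : ℝ) + 1))) := by
  have hnj : ∀ j, 1 ≤ j → j ≤ r + 1 → 0 < Hmean n κ j := by
    intro j h1 h2
    exact div_pos (hpos j h1 h2) (by exact_mod_cast Nat.choose_pos (by omega))
  have hH0 : Hmean n κ 0 = 1 := by simp [Hmean, esymmFn_zero]
  have hB := hnj 1 (by omega) (by omega)
  have Qchain : ∀ k, 1 ≤ k → k ≤ r + 1 →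
      Hmean n κ (k + 1) ≤ Hmean n κ 1 * Hmean n κ k := by
    intro k hk1
    induction k, hk1 using Nat.le_induction with
    | base =>
      intro _
      have h5 := newtonH n κ 0 (by omega)
      rw [hH0, one_mul, pow_two] at h5
      norm_num at h5 ⊢
      exact h5
    | succ k hk ih =>
      intro hk2
      have ihk := ih (by omega)
      have hNk := newtonH n κ k (by omega)
      have p1 := hnj k (by omega) (by omega)
      have p2 := hnj (k + 1) (by omega) hk2
      nlinarith [hNk, ihk, p1, p2, hB,
        mul_le_mul_of_nonneg_left ihk p2.le]
  have mac : ∀ k, 1 ≤ k → k ≤ r + 1 → Hmean n κ k ≤ Hmean n κ 1 ^ k := by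
    intro k hk1
    induction k, hk1 using Nat.le_induction with
    | base => intro _; rw [pow_one]
    | succ k hk ih =>
      intro hk2
      calc Hmean n κ (k + 1) ≤ Hmean n κ 1 * Hmean n κ k := Qchain k (by omega) (by omega)
        _ ≤ Hmean n κ 1 * Hmean n κ 1 ^ k :=
          mul_le_mul_of_nonneg_left (ih (by omega)) hB.le
        _ = Hmean n κ 1 ^ (k + 1) := by ring
  have hA := hnj (r + 1) (by omega) (le_refl _)
  have hQ : Hmean n κ (r + 2) ≤ Hmean n κ 1 * Hmean n κ (r + 1) := by
    have := Qchain (r + 1) (by omega) (le_refl _)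
    rw [show r + 1 + 1 = r + 2 from rfl] at this
    exact this
  have hM := mac (r + 1) (by omega) (le_refl _)
  -- rpow manipulations
  have hBpow : (Hmean n κ 1 ^ (r + 1) : ℝ) ^ ((1 : ℝ) / ((r : ℝ) + 1)) = Hmean n κ 1 := by
    rw [← Real.rpow_natCast (Hmean n κ 1) (r + 1), ← Real.rpow_mul hB.le]
    rw [show (((r + 1 : ℕ)) : ℝ) * ((1 : ℝ) / ((r : ℝ) + 1)) = 1 from by
      push_cast; field_simp]
    exact Real.rpow_one _
  have h1 : Hmean n κ (r + 1) ^ ((1 : ℝ) / ((r : ℝ) + 1)) ≤ Hmean n κ 1 := by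
    have h2 : Hmean n κ (r + 1) ^ ((1 : ℝ) / ((r : ℝ) + 1)) ≤
        (Hmean n κ 1 ^ (r + 1) : ℝ) ^ ((1 : ℝ) / ((r : ℝ) + 1)) :=
      Real.rpow_le_rpow hA.le hM (by positivity)
    rwa [hBpow] at h2
  have hsplit : Hmean n κ (r + 1) ^ (((r : ℝ) + 2) / ((r : ℝ) + 1)) =
      Hmean n κ (r + 1) ^ ((1 : ℝ) / ((r : ℝ) + 1)) * Hmean n κ (r + 1) := by
    rw [show ((r : ℝ) + 2) / ((r : ℝ) + 1) = (1 : ℝ) / ((r : ℝ) + 1) + 1 from by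
      field_simp; ring]
    rw [Real.rpow_add hA, Real.rpow_one]
  have key : Hmean n κ (r + 1) ^ (((r : ℝ) + 2) / ((r : ℝ) + 1)) ≤
      Hmean n κ 1 * Hmean n κ (r + 1) := by
    rw [hsplit]
    exact mul_le_mul_of_nonneg_right h1 hA.le
  -- coefficient identity
  obtain ⟨s, hs⟩ : ∃ s, n = r + 1 + s := ⟨n - (r + 1), by omega⟩
  have idr : ((n.choose (r + 1)) : ℝ) * ((r : ℝ) + 1) = ((n.choose r) : ℝ) * ((s : ℝ) + 1) := by
    have h0 := Nat.choose_succ_right_eq n r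
    have h1 : n - r = s + 1 := by omega
    rw [h1] at h0
    exact_mod_cast congrArg (fun x : ℕ => (x : ℝ)) h0
  have hn' : (n : ℝ) = (r : ℝ) + 1 + (s : ℝ) := by exact_mod_cast congrArg (fun x : ℕ => (x : ℝ)) hs
  have hco : ((r : ℝ) + 1) * cConst n (r + 1) - (n : ℝ) * cConst n r =
      -(((r : ℝ) + 1) * cConst n r) := by
    rw [cConst, cConst, show n - (r + 1) = s from by omega, show n - r = s + 1 from by omega]
    push_cast
    linear_combination (s : ℝ) * idr - ((s : ℝ) + 1) * ((n.choose r) : ℝ) * hn'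
  have hcr1 : (0 : ℝ) ≤ ((r : ℝ) + 1) * cConst n (r + 1) := by rw [cConst]; positivity
  have hcr : (0 : ℝ) ≤ ((r : ℝ) + 1) * cConst n r := by rw [cConst]; positivity
  have s1 : ((r : ℝ) + 1) * cConst n (r + 1) * Hmean n κ (r + 2) ≤
      ((r : ℝ) + 1) * cConst n (r + 1) * (Hmean n κ 1 * Hmean n κ (r + 1)) :=
    mul_le_mul_of_nonneg_left hQ hcr1
  have s2 : ((r : ℝ) + 1) * cConst n r * (Hmean n κ (r + 1) ^ (((r : ℝ) + 2) / ((r : ℝ) + 1))) ≤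
      ((r : ℝ) + 1) * cConst n r * (Hmean n κ 1 * Hmean n κ (r + 1)) :=
    mul_le_mul_of_nonneg_left key hcr
  have hco2 : ((r : ℝ) + 1) * cConst n (r + 1) * (Hmean n κ 1 * Hmean n κ (r + 1)) -
      (n : ℝ) * cConst n r * (Hmean n κ 1 * Hmean n κ (r + 1)) =
      -(((r : ℝ) + 1) * cConst n r * (Hmean n κ 1 * Hmean n κ (r + 1))) := by
    linear_combination (Hmean n κ 1 * Hmean n κ (r + 1)) * hco
  linarith [s1, s2, hco2]
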